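/- arXiv:2011.08830 — 3 statements merged into one kernel-verified Lean document; each statement's English description precedes it below -/
import Mathlib

section
/- For all integers n ≥ 1 and d ≥ 1, the product (n + 1)·d² divides ∑_{k ∣ d} μ(k) · (−1)^{n·d/k} · C((n + 1)·d/k, d/k). -/
open scoped BigOperators
open Finset


/-- `(a+b)! = a! * ∏_{k=1}^{b} (a+k)` -/
lemma fact_prod (a : ℕ) : ∀ b : ℕ, (a + b).factorial
    = a.factorial * ∏ k ∈ Icc 1 b, (a + k) := by
  intro b
  induction b with
  | zero => simp
  | succ b ih =>
      rw [prod_Icc_succ_top (by omega), ← mul_assoc, ← ih]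
      rw [← Nat.add_assoc]
      rw [Nat.factorial_succ, mul_comm]

lemma prod_Icc_id (n : ℕ) : ∏ k ∈ Icc 1 n, k = n.factorial := by
  have := fact_prod 0 n
  simpa using this.symm

/-- the multiples of p in [1, B*p] are the image of [1,B] under (p * ·) -/
lemma filter_dvd_eq_image (p B : ℕ) (hp : 0 < p) :
    (Icc 1 (B*p)).filter (fun k => p ∣ k) = (Icc 1 B).image (fun m => p * m) := by
  ext k
  simp only [mem_filter, mem_Icc, mem_image]
  rw [mul_comm B p]
  constructor
  · rintro ⟨⟨h1, h2⟩, m, rfl⟩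
    have hm1 : 1 ≤ m := by nlinarith
    exact ⟨m, ⟨hm1, Nat.le_of_mul_le_mul_left h2 hp⟩, rfl⟩
  · rintro ⟨m, ⟨h1, h2⟩, rfl⟩
    exact ⟨⟨by nlinarith, Nat.mul_le_mul_left p h2⟩, m, rfl⟩


/-- non-multiples of `p` in `[1, B*p]` -/
def NS (p B : ℕ) : Finset ℕ := (Icc 1 (B*p)).filter (fun k => ¬ p ∣ k)

lemma mem_NS {p B k : ℕ} : k ∈ NS p B ↔ (1 ≤ k ∧ k ≤ B*p) ∧ ¬ p ∣ k := by
  simp [NS, mem_filter, mem_Icc, and_assoc]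

/-- `C(a,b)*b! = (a-b)+1 ... a` product form: `C((B+D)p, Bp) * P0 = C(B+D, B) * Π (pD+k)` -/
lemma choose_ident (p B D : ℕ) (hp : 0 < p) :
    ((B+D)*p).choose (B*p) * ∏ k ∈ NS p B, k
      = (B+D).choose B * ∏ k ∈ NS p B, (p*D + k) := by
  have hfact : ∀ X Y : ℕ, (X + Y).choose Y * Y.factorial = ∏ k ∈ Icc 1 Y, (X + k) := by
    intro X Y
    have h1 := fact_prod X Y
    have h2 : (X + Y).choose Y * Y.factorial * X.factorial = (X + Y).factorial := by
      have := Nat.choose_mul_factorial_mul_factorial (Nat.le_add_left Y X)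
      simpa [Nat.add_sub_cancel] using this
    have h3 : (X + Y).choose Y * Y.factorial * X.factorial
        = (∏ k ∈ Icc 1 Y, (X + k)) * X.factorial := by
      rw [h2, h1]; ring
    exact Nat.eq_of_mul_eq_mul_right (Nat.factorial_pos X) h3
  -- full product over Icc 1 (B*p) of (D*p + k)
  have key1 : ((B+D)*p).choose (B*p) * (B*p).factorial = ∏ k ∈ Icc 1 (B*p), (D*p + k) := by
    have := hfact (D*p) (B*p)
    rwa [show D*p + B*p = (B+D)*p by ring] at this
  -- split both products along p ∣ k
  have split : ∀ f : ℕ → ℕ, ∏ k ∈ Icc 1 (B*p), f k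
      = (∏ m ∈ Icc 1 B, f (p*m)) * ∏ k ∈ NS p B, f k := by
    intro f
    rw [← prod_filter_mul_prod_filter_not (Icc 1 (B*p)) (fun k => p ∣ k) f,
      filter_dvd_eq_image p B hp, prod_image]
    · rfl
    · intro x _ y _ h
      exact Nat.eq_of_mul_eq_mul_left hp h
  have e1 : ∏ m ∈ Icc 1 B, (D*p + p*m) = p^B * ((B+D).choose B * B.factorial) := by
    have h : ∀ m ∈ Icc 1 B, D*p + p*m = p * (D + m) := by intro m _; ring
    rw [prod_congr rfl h, prod_mul_distrib, prod_const, Nat.card_Icc,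
      ← hfact D B, Nat.add_comm D B]
    simp
  have e2 : (B*p).factorial = p^B * B.factorial * ∏ k ∈ NS p B, k := by
    rw [← prod_Icc_id (B*p), split (fun k => k), prod_mul_distrib, prod_const,
      Nat.card_Icc, prod_Icc_id]
    simp
  have key2 : ((B+D)*p).choose (B*p) * (p^B * B.factorial * ∏ k ∈ NS p B, k)
      = p^B * ((B+D).choose B * B.factorial) * ∏ k ∈ NS p B, (D*p + k) := by
    rw [← e2, key1, split (fun k => D*p + k), e1]
  have hpos : 0 < p^B * B.factorial := by positivity
  apply Nat.eq_of_mul_eq_mul_left hpos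
  calc p^B * B.factorial * (((B+D)*p).choose (B*p) * ∏ k ∈ NS p B, k)
      = ((B+D)*p).choose (B*p) * (p^B * B.factorial * ∏ k ∈ NS p B, k) := by ring
    _ = p^B * ((B+D).choose B * B.factorial) * ∏ k ∈ NS p B, (D*p + k) := key2
    _ = p^B * B.factorial * ((B+D).choose B * ∏ k ∈ NS p B, (D*p + k)) := by ring
    _ = p^B * B.factorial * ((B+D).choose B * ∏ k ∈ NS p B, (p*D + k)) := by rw [mul_comm D p]


lemma NS_reflect {p B k : ℕ} (hk : k ∈ NS p B) : B*p - k ∈ NS p B := by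
  rw [mem_NS] at hk ⊢
  obtain ⟨⟨h1, h2⟩, h3⟩ := hk
  have hkne : k ≠ B*p := fun h => h3 (h ▸ dvd_mul_left p B)
  refine ⟨⟨by omega, by omega⟩, fun hdvd => h3 ?_⟩
  have : k = B*p - (B*p - k) := by omega
  rw [this]
  exact Nat.dvd_sub (dvd_mul_left p B) hdvd

lemma pairing (p B : ℕ) (hmid : ∀ k ∈ NS p B, 2*k ≠ B*p) :
    ((B:ℤ)*p) ∣ ∑ k ∈ NS p B, ∏ l ∈ (NS p B).erase k, (l:ℤ) := by
  set S := NS p B with hS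
  have hle : ∀ k ∈ S, k ≤ B*p := fun k hk => (mem_NS.1 hk).1.2
  rw [← sum_filter_add_sum_filter_not S (fun k => 2*k < B*p)]
  have h2 : ∑ k ∈ S.filter (fun k => ¬ 2*k < B*p), ∏ l ∈ S.erase k, (l:ℤ)
      = ∑ k ∈ S.filter (fun k => 2*k < B*p), ∏ l ∈ S.erase (B*p - k), (l:ℤ) := by
    apply sum_nbij' (i := fun k => B*p - k) (j := fun k => B*p - k)
    · intro a ha
      rw [mem_filter] at ha ⊢
      obtain ⟨haS, hagt⟩ := ha
      have h2a : 2*a ≠ B*p := hmid a haS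
      exact ⟨NS_reflect haS, by have := hle a haS; omega⟩
    · intro a ha
      rw [mem_filter] at ha ⊢
      obtain ⟨haS, hagt⟩ := ha
      have := hle a haS
      exact ⟨NS_reflect haS, by omega⟩
    · intro a ha; rw [mem_filter] at ha; have := hle a ha.1; omega
    · intro a ha; rw [mem_filter] at ha; have := hle a ha.1; omega
    · intro a ha
      rw [mem_filter] at ha
      have h := hle a ha.1
      have : B*p - (B*p - a) = a := by omega
      rw [this]
  rw [h2, ← sum_add_distrib]
  apply dvd_sum
  intro k hk
  rw [mem_filter] at hk
  obtain ⟨hkS, hklt⟩ := hk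
  have hkBp := hle k hkS
  have hk' : B*p - k ∈ S := NS_reflect hkS
  have hne : B*p - k ≠ k := by have := hmid k hkS; omega
  have hmem : B*p - k ∈ S.erase k := mem_erase.2 ⟨hne, hk'⟩
  have hmem' : k ∈ S.erase (B*p - k) := mem_erase.2 ⟨fun h => hne h.symm, hkS⟩
  rw [← mul_prod_erase _ _ hmem, ← mul_prod_erase _ _ hmem']
  rw [Finset.erase_right_comm (a := k) (b := B*p - k)]
  rw [← add_mul]
  have hcast : ((B*p - k : ℕ) : ℤ) + (k : ℤ) = (B:ℤ)*p := by
    exact_mod_cast Nat.sub_add_cancel hkBp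
  rw [hcast]
  exact Dvd.dvd.mul_right (dvd_refl _) _


lemma NS_card (p B : ℕ) (hp : 0 < p) : (NS p B).card = B*p - B := by
  have h := card_filter_add_card_filter_not (s := Icc 1 (B*p)) (fun k => p ∣ k)
  rw [filter_dvd_eq_image p B hp, card_image_of_injective _
    (fun a b hab => Nat.eq_of_mul_eq_mul_left hp hab), Nat.card_Icc, Nat.card_Icc] at h
  have : (NS p B).card = ((Icc 1 (B*p)).filter (fun k => ¬ p ∣ k)).card := rfl
  omega

lemma NS_not_dvd_prod (p B : ℕ) (hp : p.Prime) :
    ¬ (p:ℤ) ∣ ∏ k ∈ NS p B, (k:ℤ) := by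
  intro h
  obtain ⟨k, hk, hdvd⟩ := (Nat.prime_iff_prime_int.1 hp).exists_mem_finset_dvd h

  exact (mem_NS.1 hk).2 (by exact_mod_cast hdvd)

lemma NS_P1_odd (B : ℕ) (hB : ¬ 2 ∣ B) :
    ¬ (2:ℤ) ∣ ∑ k ∈ NS 2 B, ∏ l ∈ (NS 2 B).erase k, (l:ℤ) := by
  rw [show (2:ℤ) = ((2:ℕ):ℤ) by norm_num, ← ZMod.intCast_zmod_eq_zero_iff_dvd _ 2]
  intro h
  push_cast at h
  have h1 : ∀ k ∈ NS 2 B, ∏ l ∈ (NS 2 B).erase k, ((l:ℕ) : ZMod 2) = 1 := by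
    intro k hk
    apply prod_eq_one
    intro l hl
    have hlS := mem_erase.1 hl |>.2
    have : ¬ (2 ∣ l) := (mem_NS.1 hlS).2
    have : ((l:ℕ) : ZMod 2) ≠ 0 := by
      rw [Ne, ZMod.natCast_eq_zero_iff]
      exact this
    have hz : ∀ x : ZMod 2, x ≠ 0 → x = 1 := by decide
    exact hz _ this
  rw [sum_congr rfl h1, sum_const, nsmul_eq_mul, mul_one, NS_card 2 B (by norm_num)] at h
  rw [ZMod.natCast_eq_zero_iff] at h
  omega

lemma qlemma (p B D : ℕ) (hp : p.Prime) (hB : 1 ≤ B)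
    (hD : (p:ℤ)^(B.factorization p) ∣ (D:ℤ)) :
    (p:ℤ)^(2 + 2*(B.factorization p)) ∣
      (∏ k ∈ NS p B, ((p:ℤ)*D + k)) - (-1:ℤ)^(D*B*(p-1)) * ∏ k ∈ NS p B, (k:ℤ) := by
  have hp1 : 0 < p := hp.pos
  set w := B.factorization p with hw
  rcases Nat.eq_zero_or_pos D with rfl | hD1
  · simp
  set S := NS p B with hSdef
  set P0 : ℤ := ∏ k ∈ S, (k:ℤ) with hP0
  set P1 : ℤ := ∑ k ∈ S, ∏ l ∈ S.erase k, (l:ℤ) with hP1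
  set T2 : ℤ := ∑ t ∈ S.powerset.filter (fun t => ¬ t.card ≤ 1),
      ((p:ℤ)*D)^t.card * ∏ k ∈ S \ t, (k:ℤ) with hT2
  -- expansion of the product
  have expand : (∏ k ∈ S, ((p:ℤ)*D + k))
      = ∑ t ∈ S.powerset, ((p:ℤ)*D)^t.card * ∏ k ∈ S \ t, (k:ℤ) := by
    rw [Finset.prod_add]
    exact sum_congr rfl fun t _ => by rw [prod_const]
  have hfil : S.powerset.filter (fun t => t.card ≤ 1)
      = insert (∅ : Finset ℕ) (S.image (fun k => ({k} : Finset ℕ))) := by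
    ext t
    simp only [mem_filter, mem_powerset, mem_insert, mem_image]
    constructor
    · rintro ⟨hsub, hcard⟩
      rcases Nat.le_one_iff_eq_zero_or_eq_one.1 hcard with h0 | h1
      · exact Or.inl (card_eq_zero.1 h0)
      · obtain ⟨a, rfl⟩ := card_eq_one.1 h1
        exact Or.inr ⟨a, singleton_subset_iff.1 hsub, rfl⟩
    · rintro (rfl | ⟨a, ha, rfl⟩)
      · simp
      · exact ⟨singleton_subset_iff.2 ha, by simp⟩
  have decomp : (∏ k ∈ S, ((p:ℤ)*D + k)) = P0 + (p:ℤ)*D*P1 + T2 := by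
    rw [expand, ← sum_filter_add_sum_filter_not S.powerset (fun t => t.card ≤ 1), hfil,
      sum_insert (by simp), sum_image (fun x _ y _ h => Finset.singleton_injective h)]
    rw [← hT2]
    have hemp : ((p:ℤ)*D)^(∅:Finset ℕ).card * ∏ k ∈ S \ (∅:Finset ℕ), (k:ℤ) = P0 := by simp [hP0]
    have hsing : ∑ k ∈ S, ((p:ℤ)*D)^({k}:Finset ℕ).card * ∏ l ∈ S \ {k}, (l:ℤ)
        = (p:ℤ)*D*P1 := by
      rw [hP1, mul_sum]
      refine sum_congr rfl fun k _ => ?_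
      rw [card_singleton, pow_one, ← erase_eq]
    rw [hemp, hsing]
  -- divisibility of pieces
  have h1w : (p:ℤ)^(1+w) ∣ (p:ℤ)*D := by
    rw [pow_add, pow_one]
    exact mul_dvd_mul (dvd_refl _) hD
  have hT2dvd : (p:ℤ)^(2+2*w) ∣ T2 := by
    apply dvd_sum
    intro t ht
    rw [mem_filter] at ht
    have hcard : 2 ≤ t.card := by omega
    apply dvd_mul_of_dvd_left
    calc (p:ℤ)^(2+2*w) = ((p:ℤ)^(1+w))^2 := by rw [← pow_mul]; congr 1; ring
      _ ∣ ((p:ℤ)*D)^2 := pow_dvd_pow_of_dvd h1w 2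
      _ ∣ ((p:ℤ)*D)^t.card := pow_dvd_pow _ hcard
  by_cases hexc : p = 2 ∧ ¬ 2 ∣ B
  · -- exceptional case p = 2, B odd
    obtain ⟨rfl, hBodd⟩ := hexc
    have hw0 : w = 0 := Nat.factorization_eq_zero_of_not_dvd hBodd
    rw [hw0] at hT2dvd ⊢
    have hP0odd : Odd P0 := by
      rw [← Int.not_even_iff_odd, even_iff_two_dvd]
      exact fun h => NS_not_dvd_prod 2 B hp (by exact_mod_cast h)
    have hP1odd : Odd P1 := by
      rw [← Int.not_even_iff_odd, even_iff_two_dvd]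
      exact fun h => NS_P1_odd B hBodd (by exact_mod_cast h)
    rcases Nat.even_or_odd D with hDe | hDo
    · have heps : (-1:ℤ)^(D*B*(2-1)) = 1 :=
        Even.neg_one_pow (by simpa using (hDe.mul_right B))
      rw [heps, one_mul, decomp]
      have : P0 + (2:ℕ)*(D:ℤ)*P1 + T2 - P0 = (2:ℕ)*(D:ℤ)*P1 + T2 := by ring
      rw [this]
      apply dvd_add _ hT2dvd
      apply dvd_mul_of_dvd_left
      obtain ⟨D', rfl⟩ := hDe
      push_cast
      ring_nf
      exact ⟨D', by ring⟩
    · have heps : (-1:ℤ)^(D*B*(2-1)) = -1 :=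
        Odd.neg_one_pow (by simpa using (hDo.mul (Nat.odd_iff.2 (by omega))))
      rw [heps, decomp]
      have : P0 + (2:ℕ)*(D:ℤ)*P1 + T2 - (-1)*P0 = 2*(P0 + (D:ℤ)*P1) + T2 := by
        push_cast; ring
      rw [this]
      apply dvd_add _ hT2dvd
      have hDodd : Odd (D:ℤ) := by exact_mod_cast hDo
      have heven : Even (P0 + (D:ℤ)*P1) := hP0odd.add_odd (hDodd.mul hP1odd)
      obtain ⟨x, hx⟩ := heven
      rw [hx]
      exact ⟨x, by push_cast; ring⟩
  · -- main case
    have hmid : ∀ k ∈ S, 2*k ≠ B*p := by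
      intro k hk heq
      have hknd := (mem_NS.1 hk).2
      rcases hp.eq_two_or_odd' with rfl | hodd
      · have hk2 : k = B := by omega
        exact hknd (hk2 ▸ (by omega : 2 ∣ B))
      · have hpd : p ∣ 2*k := ⟨B, by rw [heq, mul_comm]⟩
        have : p ∣ k := (Nat.Coprime.dvd_of_dvd_mul_left
          (Nat.coprime_two_left.2 hodd).symm hpd)
        exact hknd this
    have heps : (-1:ℤ)^(D*B*(p-1)) = 1 := by
      apply Even.neg_one_pow
      rcases hp.eq_two_or_odd' with rfl | hodd
      · have hB2 : 2 ∣ B := by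
          by_contra hB2
          exact hexc ⟨rfl, hB2⟩
        exact Nat.even_mul.2 (Or.inl (Nat.even_mul.2 (Or.inr (even_iff_two_dvd.2 hB2))))
      · exact Nat.even_mul.2 (Or.inr (Nat.Odd.sub_odd hodd (by norm_num)))
    have hP1dvd : (p:ℤ)^(1+w) ∣ P1 := by
      have h1 : ((B:ℤ)*p) ∣ P1 := pairing p B hmid
      have h2 : (p:ℤ)^(1+w) ∣ (B:ℤ)*p := by
        rw [pow_add, pow_one, mul_comm ((p:ℤ)) ((p:ℤ)^w)]
        exact mul_dvd_mul (by exact_mod_cast Nat.ordProj_dvd B p) (dvd_refl _)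
      exact h2.trans h1
    rw [heps, one_mul, decomp]
    have hrw : P0 + (p:ℤ)*D*P1 + T2 - P0 = (p:ℤ)*D*P1 + T2 := by ring
    rw [hrw]
    apply dvd_add _ hT2dvd
    rw [show 2+2*w = (1+w)+(1+w) from by ring, pow_add]
    exact mul_dvd_mul h1w hP1dvd


lemma chooseL0 (n m : ℕ) (hm : 1 ≤ m) :
    ((n+1)*m).choose m = (n+1) * (((n+1)*m - 1).choose (m-1)) := by
  have h := Nat.add_one_mul_choose_eq ((n+1)*m - 1) (m-1)
  have hm1 : 1 ≤ (n+1)*m := by nlinarith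
  have h1 : ((n+1)*m - 1) + 1 = (n+1)*m := by omega
  have h2 : (m-1) + 1 = m := by omega
  rw [h1, h2] at h
  apply Nat.eq_of_mul_eq_mul_right (show 0 < m by omega)
  calc ((n+1)*m).choose m * m = (n+1)*m * (((n+1)*m-1).choose (m-1)) := h.symm
    _ = (n+1) * (((n+1)*m - 1).choose (m-1)) * m := by ring

lemma sign_eq (n M p : ℕ) (hp : 1 ≤ p) :
    ((-1:ℤ))^(n*(p*M)) * (-1)^((n*M)*M*(p-1)) = (-1)^(n*M) := by
  rcases Nat.even_or_odd (n*M) with he | ho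
  · have h1 : Even (n*(p*M)) := by
      rw [show n*(p*M) = (n*M)*p from by ring]; exact he.mul_right p
    have h2 : Even ((n*M)*M*(p-1)) := (he.mul_right M).mul_right _
    rw [h1.neg_one_pow, h2.neg_one_pow, he.neg_one_pow]; norm_num
  · have hM : Odd M := (Nat.odd_mul.1 ho).2
    rcases Nat.even_or_odd p with hpe | hpo
    · have h1 : Even (n*(p*M)) := by
        rw [show n*(p*M) = p*(n*M) from by ring]; exact hpe.mul_right _
      have h2 : Odd ((n*M)*M*(p-1)) := (ho.mul hM).mul (Nat.Even.sub_odd hp hpe odd_one)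
      rw [h1.neg_one_pow, h2.neg_one_pow, ho.neg_one_pow]; norm_num
    · have h1 : Odd (n*(p*M)) := by
        rw [show n*(p*M) = (n*M)*p from by ring]; exact ho.mul hpo
      have h2 : Even ((n*M)*M*(p-1)) := Even.mul_left (Nat.Odd.sub_odd hpo odd_one) _
      rw [h1.neg_one_pow, h2.neg_one_pow, ho.neg_one_pow]; norm_num

lemma key (p n M : ℕ) (hp : p.Prime) (hM : 1 ≤ M) :
    (p:ℤ)^(2*(M.factorization p + 1)) ∣
      ((-1:ℤ))^(n*(p*M)) * ((((n+1)*(p*M) - 1).choose (p*M - 1) : ℕ) : ℤ)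
      - ((-1:ℤ))^(n*M) * ((((n+1)*M - 1).choose (M - 1) : ℕ) : ℤ) := by
  set w := M.factorization p with hw
  set c := (n+1).factorization p with hc
  set ε : ℤ := (-1:ℤ)^((n*M)*M*(p-1)) with hεdef
  set Cbig : ℤ := (((M+n*M)*p).choose (M*p) : ℤ) with hCbig
  set Csmall : ℤ := ((M+n*M).choose M : ℤ) with hCsmall
  set P0 : ℤ := ∏ k ∈ NS p M, (k:ℤ) with hP0
  set Pr : ℤ := ∏ k ∈ NS p M, ((p:ℤ)*((n*M : ℕ):ℤ) + (k:ℤ)) with hPr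
  -- the product identity
  have ident : Cbig * P0 = Csmall * Pr := by
    have h := congrArg (fun x : ℕ => (x:ℤ)) (choose_ident p M (n*M) hp.pos)
    push_cast at h
    rw [hCbig, hCsmall, hP0, hPr]
    push_cast
    linear_combination h
  -- q-lemma
  have hq : (p:ℤ)^(2 + 2*w) ∣ Pr - ε * P0 := by
    have hD : (p:ℤ)^w ∣ ((n*M : ℕ):ℤ) := by
      have : (p:ℕ)^w ∣ n*M := (Nat.ordProj_dvd M p).mul_left n
      exact_mod_cast Int.natCast_dvd_natCast.2 this
    rw [hPr, hP0, hεdef, hw]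
    exact qlemma p M (n*M) hp hM hD
  -- p^c divides Csmall
  have hcdvd : (p:ℤ)^c ∣ Csmall := by
    have h1 : (n+1)*M = M + n*M := by ring
    have h2 : (M+n*M).choose M = (n+1) * (((n+1)*M - 1).choose (M-1)) := by
      rw [← h1]; exact chooseL0 n M hM
    have h3 : (p:ℕ)^c ∣ (M+n*M).choose M := by
      rw [h2]; exact (Nat.ordProj_dvd (n+1) p).mul_right _
    rw [hCsmall]
    exact_mod_cast h3
  -- combine
  set X : ℤ := Cbig - ε * Csmall with hX
  have hXP0 : X * P0 = Csmall * (Pr - ε * P0) := by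
    rw [hX]; rw [sub_mul, ident]; ring
  have hdvdXP0 : (p:ℤ)^(2 + 2*w + c) ∣ X * P0 := by
    rw [hXP0, show 2 + 2*w + c = c + (2 + 2*w) from by ring, pow_add]
    exact mul_dvd_mul hcdvd hq
  have hcop : IsCoprime ((p:ℤ)^(2 + 2*w + c)) P0 := by
    apply IsCoprime.pow_left
    rw [(Nat.prime_iff_prime_int.1 hp).coprime_iff_not_dvd]
    exact NS_not_dvd_prod p M hp
  have hdvdX : (p:ℤ)^(2 + 2*w + c) ∣ X := hcop.dvd_of_dvd_mul_right hdvdXP0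
  -- translate X into the goal
  have hbig : ((n+1)*(p*M)).choose (p*M) = ((M+n*M)*p).choose (M*p) := by
    rw [show (n+1)*(p*M) = (M+n*M)*p from by ring, show p*M = M*p from by ring]
  have hbig2 : (Cbig : ℤ) = (n+1) * ((((n+1)*(p*M) - 1).choose (p*M - 1) : ℕ) : ℤ) := by
    rw [hCbig, ← hbig, chooseL0 n (p*M) (by nlinarith [hp.pos])]
    push_cast; ring
  have hsmall2 : (Csmall : ℤ) = (n+1) * ((((n+1)*M - 1).choose (M - 1) : ℕ) : ℤ) := by
    rw [hCsmall, show M + n*M = (n+1)*M from by ring, chooseL0 n M hM]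
    push_cast; ring
  set T : ℤ := ((-1:ℤ))^(n*(p*M)) * ((((n+1)*(p*M) - 1).choose (p*M - 1) : ℕ) : ℤ)
      - ((-1:ℤ))^(n*M) * ((((n+1)*M - 1).choose (M - 1) : ℕ) : ℤ) with hT
  have hsg : (-1:ℤ)^(n*(p*M)) * ε = (-1:ℤ)^(n*M) := by
    rw [hεdef]; exact sign_eq n M p hp.pos
  have e1 : ((n:ℤ)+1) * T = (-1:ℤ)^(n*(p*M)) * Cbig - (-1:ℤ)^(n*M) * Csmall := by
    rw [hT, hbig2, hsmall2]; push_cast; ring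
  have e2 : (-1:ℤ)^(n*(p*M)) * X = (-1:ℤ)^(n*(p*M)) * Cbig - (-1:ℤ)^(n*M) * Csmall := by
    rw [hX, mul_sub,
      show (-1:ℤ)^(n*(p*M)) * (ε * Csmall) = ((-1:ℤ)^(n*(p*M)) * ε) * Csmall from by ring,
      hsg]
  have hTX : ((n:ℤ)+1) * T = (-1:ℤ)^(n*(p*M)) * X := e1.trans e2.symm
  have hdvdT' : (p:ℤ)^(2+2*w+c) ∣ ((n:ℤ)+1) * T := by
    rw [hTX]; exact hdvdX.mul_left _
  set u : ℕ := (n+1) / p^c with hu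
  have hun : ((n:ℤ)+1) = (p:ℤ)^c * (u:ℤ) := by
    have h := Nat.ordProj_mul_ordCompl_eq_self (n+1) p
    rw [hu, hc]
    exact_mod_cast h.symm
  have hdvd2 : (p:ℤ)^c * (p:ℤ)^(2+2*w) ∣ (p:ℤ)^c * ((u:ℤ) * T) := by
    rw [← pow_add, show c + (2+2*w) = 2+2*w+c from by ring,
      show (p:ℤ)^c * ((u:ℤ) * T) = ((n:ℤ)+1) * T from by rw [hun]; ring]
    exact hdvdT'
  have hpne : ((p:ℤ))^c ≠ 0 := pow_ne_zero c (by exact_mod_cast hp.ne_zero)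
  have hdvd3 : (p:ℤ)^(2+2*w) ∣ (u:ℤ) * T := (mul_dvd_mul_iff_left hpne).1 hdvd2
  have hcopu : IsCoprime ((p:ℤ)^(2+2*w)) (u:ℤ) := by
    apply IsCoprime.pow_left
    rw [(Nat.prime_iff_prime_int.1 hp).coprime_iff_not_dvd]
    have := Nat.not_dvd_ordCompl hp (Nat.succ_ne_zero n)
    rw [Int.natCast_dvd_natCast]
    rw [hu, hc]
    exact this
  have hfin : (p:ℤ)^(2+2*w) ∣ T := hcopu.dvd_of_dvd_mul_left hdvd3
  rw [show 2*(w+1) = 2+2*w from by ring]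
  exact hfin


lemma perprime (n d p : ℕ) (hd : 1 ≤ d) (hp : p.Prime) (hpd : p ∣ d) :
    (p:ℤ)^(2 * d.factorization p) ∣
      ∑ k ∈ d.divisors, (ArithmeticFunction.moebius k : ℤ) *
        ((-1:ℤ)^(n*(d/k)) * (((((n+1)*(d/k) - 1).choose (d/k - 1)) : ℕ) : ℤ)) := by
  classical
  set e := d.factorization p with he
  have he1 : 1 ≤ e := hp.factorization_pos_of_dvd (by omega) hpd
  set b : ℕ → ℤ := fun m => (-1:ℤ)^(n*m) * ((((n+1)*m - 1).choose (m - 1) : ℕ) : ℤ) with hb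
  have hgoal : ∀ k, (ArithmeticFunction.moebius k : ℤ) *
      ((-1:ℤ)^(n*(d/k)) * (((((n+1)*(d/k) - 1).choose (d/k - 1)) : ℕ) : ℤ))
      = (ArithmeticFunction.moebius k : ℤ) * b (d/k) := fun k => rfl
  simp only [hgoal]
  rw [← sum_filter_add_sum_filter_not d.divisors (fun k => p ∣ k)]
  -- kill the p² ∣ k part
  have hzero : ∑ k ∈ (d.divisors.filter (fun k => p ∣ k)).filter (fun k => p*p ∣ k),
      (ArithmeticFunction.moebius k : ℤ) * b (d/k) = 0 := by
    apply sum_eq_zero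
    intro k hk
    rw [mem_filter] at hk
    have : ¬ Squarefree k := by
      intro hsf
      exact hp.not_isUnit (hsf p hk.2)
    rw [ArithmeticFunction.moebius_eq_zero_of_not_squarefree this]
    simp
  have hsplit2 : ∑ k ∈ d.divisors.filter (fun k => p ∣ k),
        (ArithmeticFunction.moebius k : ℤ) * b (d/k)
      = ∑ k ∈ (d.divisors.filter (fun k => p ∣ k)).filter (fun k => ¬ p*p ∣ k),
        (ArithmeticFunction.moebius k : ℤ) * b (d/k) := by
    rw [← sum_filter_add_sum_filter_not (d.divisors.filter (fun k => p ∣ k))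
      (fun k => p*p ∣ k), hzero, zero_add]
  -- bijection k ↦ k/p
  have hbij : ∑ k ∈ (d.divisors.filter (fun k => p ∣ k)).filter (fun k => ¬ p*p ∣ k),
        (ArithmeticFunction.moebius k : ℤ) * b (d/k)
      = ∑ k ∈ d.divisors.filter (fun k => ¬ p ∣ k),
        (-(ArithmeticFunction.moebius k : ℤ)) * b (d/k/p) := by
    apply sum_nbij' (i := fun k => k / p) (j := fun k => p * k)
    · intro a ha
      simp only [mem_filter, Nat.mem_divisors] at ha ⊢
      obtain ⟨⟨⟨had, hd0⟩, hpa⟩, hppa⟩ := ha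
      refine ⟨⟨(Nat.div_dvd_of_dvd hpa).trans had, hd0⟩, fun hdvd => hppa ?_⟩
      have := mul_dvd_mul_left p hdvd
      rwa [Nat.mul_div_cancel' hpa] at this
    · intro a ha
      simp only [mem_filter, Nat.mem_divisors] at ha ⊢
      obtain ⟨⟨had, hd0⟩, hpa⟩ := ha
      refine ⟨⟨⟨(Nat.Coprime.mul_dvd_of_dvd_of_dvd
        ((hp.coprime_iff_not_dvd).2 hpa) hpd had), hd0⟩, dvd_mul_right p a⟩, fun h => hpa ?_⟩
      exact (Nat.mul_dvd_mul_iff_left hp.pos).1 h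
    · intro a ha
      simp only [mem_filter, Nat.mem_divisors] at ha
      exact Nat.mul_div_cancel' ha.1.2
    · intro a _
      exact Nat.mul_div_cancel_left a hp.pos
    · intro a ha
      simp only [mem_filter, Nat.mem_divisors] at ha
      obtain ⟨⟨⟨had, hd0⟩, hpdvda⟩, hppa⟩ := ha
      have hcop : Nat.Coprime p (a / p) := by
        refine (hp.coprime_iff_not_dvd).2 (fun hdvd => hppa ?_)
        have := mul_dvd_mul_left p hdvd
        rwa [Nat.mul_div_cancel' hpdvda] at this
      have hμ : (ArithmeticFunction.moebius a : ℤ)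
          = -(ArithmeticFunction.moebius (a / p) : ℤ) := by
        conv_lhs => rw [← Nat.mul_div_cancel' hpdvda]
        rw [ArithmeticFunction.isMultiplicative_moebius.map_mul_of_coprime hcop,
          ArithmeticFunction.moebius_apply_prime hp]
        push_cast
        ring
      rw [hμ]
      have harg : d / (a/p) / p = d / a := by
        rw [Nat.div_div_eq_div_mul, Nat.div_mul_cancel hpdvda]
      rw [harg]
  rw [hsplit2, hbij, ← sum_add_distrib]
  apply dvd_sum
  intro k hk
  rw [mem_filter, Nat.mem_divisors] at hk
  obtain ⟨⟨hkd, hd0⟩, hknd⟩ := hk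
  have hkpos : 0 < k := Nat.pos_of_dvd_of_pos hkd (by omega)
  set m := d / k with hm
  have hmpos : 0 < m := Nat.div_pos (Nat.le_of_dvd (by omega) hkd) hkpos
  have hmfact : m.factorization p = e := by
    rw [hm, Nat.factorization_div hkd, Finsupp.tsub_apply, ← he,
      Nat.factorization_eq_zero_of_not_dvd hknd]
    omega
  have hpm : p ∣ m := by
    apply Nat.dvd_of_factorization_pos
    rw [hmfact]; omega
  set M := m / p with hM
  have hmM : m = p * M := (Nat.mul_div_cancel' hpm).symm
  have hM1 : 1 ≤ M := by
    rcases Nat.eq_zero_or_pos M with h0 | h1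
    · rw [h0, mul_zero] at hmM; omega
    · exact h1
  have hMfact : M.factorization p = e - 1 := by
    rw [hM, Nat.factorization_div hpm, Finsupp.tsub_apply, hmfact, hp.factorization,
      Finsupp.single_eq_same]
  have hkey := key p n M hp hM1
  rw [hMfact, show 2*(e - 1 + 1) = 2*e from by omega] at hkey
  have h2 : -(ArithmeticFunction.moebius k : ℤ) * b M + (ArithmeticFunction.moebius k : ℤ) * b m
      = (ArithmeticFunction.moebius k : ℤ) * (b (p*M) - b M) := by
    rw [hmM]; ring
  rw [h2]
  exact (hkey).mul_left _

/-- Integrality of the Klemm–Pandharipande invariants for the orbifold Looijenga pair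
`(P(1,1,n), D1 + D2)` (Section 8): for all `n ≥ 1` and `d ≥ 1`, `(n+1) d²` divides
`∑_{k ∣ d} μ(k) (-1)^{n d/k} C((n+1) d/k, d/k)`. -/
theorem stmt10 (n d : ℕ) (hn : 1 ≤ n) (hd : 1 ≤ d) :
    (((n : ℤ) + 1) * (d : ℤ) ^ 2) ∣
      ∑ k ∈ d.divisors,
        ArithmeticFunction.moebius k * (-1) ^ (n * (d / k)) *
          (((n + 1) * (d / k)).choose (d / k) : ℤ) := by
  classical
  set Ssum : ℤ := ∑ k ∈ d.divisors, (ArithmeticFunction.moebius k : ℤ) *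
      ((-1:ℤ)^(n*(d/k)) * (((((n+1)*(d/k) - 1).choose (d/k - 1)) : ℕ) : ℤ)) with hSsum
  have hrw : ∑ k ∈ d.divisors,
        (ArithmeticFunction.moebius k : ℤ) * (-1) ^ (n * (d / k)) *
          (((n + 1) * (d / k)).choose (d / k) : ℤ)
      = ((n:ℤ)+1) * Ssum := by
    rw [hSsum, mul_sum]
    apply sum_congr rfl
    intro k hk
    have hk1 : 1 ≤ d / k := Nat.div_pos (Nat.le_of_dvd (by omega) (Nat.dvd_of_mem_divisors hk))
      (Nat.pos_of_mem_divisors hk)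
    rw [chooseL0 n (d/k) hk1]
    push_cast
    ring
  rw [hrw]
  apply mul_dvd_mul_left
  -- it suffices to prove the divisibility for |Ssum| in ℕ
  rcases eq_or_ne Ssum 0 with h0 | hne
  · rw [h0]; exact dvd_zero _
  have hnat : d^2 ∣ Ssum.natAbs := by
    have hmne : Ssum.natAbs ≠ 0 := fun h => hne (Int.natAbs_eq_zero.1 h)
    rw [← Nat.factorization_le_iff_dvd (by positivity) hmne]
    intro q
    by_cases hq : q.Prime ∧ q ∣ d
    · obtain ⟨hqp, hqd⟩ := hq
      have hfact2 : (d^2).factorization q = 2 * d.factorization q := by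
        rw [Nat.factorization_pow]; simp [mul_comm]
      rw [hfact2]
      have hper := perprime n d q hd hqp hqd
      have : (q:ℤ)^(2 * d.factorization q) ∣ (Ssum.natAbs : ℤ) := Int.dvd_natAbs.2 hper
      have hnd : q^(2 * d.factorization q) ∣ Ssum.natAbs := by exact_mod_cast this
      exact (hqp.pow_dvd_iff_le_factorization hmne).1 hnd
    · push_neg at hq
      by_cases hqp : q.Prime
      · have : ¬ q ∣ d^2 := fun h => (hq hqp) (hqp.dvd_of_dvd_pow h)
        rw [Nat.factorization_eq_zero_of_not_dvd this]
        omega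
      · rw [Nat.factorization_eq_zero_of_not_prime _ hqp]
        omega
  have h1 : ((d^2 : ℕ) : ℤ) ∣ ((Ssum.natAbs : ℕ) : ℤ) := Int.natCast_dvd_natCast.2 hnat
  have h2 : ((d^2 : ℕ) : ℤ) ∣ Ssum := Int.dvd_natAbs.1 h1
  exact_mod_cast h2
end

section
/- In ℝ⁶ with coordinates (d0, d1, d2, d3, d4, d5), consider the following 21 vectors: for each 1 ≤ i ≤ 5, the vector with d0 = 0, d_i = 1 and all other coordinates 0; for each 1 ≤ i ≤ 5, the vector with d0 = 1, d_i = 0 and d_j = 1 for all j ≠ i; for each pair 1 ≤ i < j ≤ 5, the vector with d0 = 1, d_i = d_j = 0 and d_k = 1 for all k ∉ {i, j}; and the vector with d0 = 2 and d_i = 1 for all 1 ≤ i ≤ 5. A vector (d0, d1, …, d5) ∈ ℝ⁶ is a finite nonnegative linear combination of these 21 vectors if and only if all of the following hold: d0 ≥ 0; d_i ≥ 0 for all 1 ≤ i ≤ 5; d_i + d_j + d_k ≥ d0 for all pairwise distinct i, j, k ∈ {1, …, 5}; d_i + d_j + d_k + d_l ≥ 2d0 for all pairwise distinct i, j, k,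 l ∈ {1, …, 5}; and 2d_i + ∑_{j ≠ i} d_j ≥ 3d0 for each 1 ≤ i ≤ 5. -/
open scoped BigOperators

/-- In coordinates `(d0, d1, …, d5)` on `ℝ⁶` (index `0` is `d0`, index `i.succ` is `dᵢ`):
the generator `Eᵢ`, i.e. the vector with `d0 = 0`, `dᵢ = 1` and other coordinates `0`. -/
noncomputable def genA (i : Fin 5) : Fin 6 → ℝ := fun j => if j = i.succ then 1 else 0

/-- The generator `H - Eᵢ`: `d0 = 1`, `dᵢ = 0` and `dⱼ = 1` for `j ≠ i`. -/
noncomputable def genB (i : Fin 5) : Fin 6 → ℝ := fun j =>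
  if j = 0 then 1 else if j = i.succ then 0 else 1

/-- The generator `H - Eᵢ - Eⱼ` (for `i ≠ j`): `d0 = 1`, `dᵢ = dⱼ = 0` and `dₖ = 1`
for `k ∉ {i, j}`. -/
noncomputable def genC (i j : Fin 5) : Fin 6 → ℝ := fun m =>
  if m = 0 then 1 else if m = i.succ ∨ m = j.succ then 0 else 1

/-- The generator `2H - E₁ - ⋯ - E₅`: `d0 = 2` and `dᵢ = 1` for all `i`. -/
noncomputable def genD : Fin 6 → ℝ := fun j => if j = 0 then 2 else 1


def InCone (v : Fin 6 → ℝ) : Prop :=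
  ∃ (a : Fin 5 → ℝ) (c : Fin 5 → Fin 5 → ℝ) (e : ℝ),
    (∀ i, 0 ≤ a i) ∧ (∀ i j, 0 ≤ c i j) ∧ 0 ≤ e ∧
    v = (∑ i, a i • genA i) + (∑ i, ∑ j, c i j • genC i j) + e • genD

def permExt (σ : Equiv.Perm (Fin 5)) : Fin 6 → Fin 6 :=
  Fin.cases 0 (fun i => (σ i).succ)

@[simp] lemma permExt_zero (σ : Equiv.Perm (Fin 5)) : permExt σ 0 = 0 := rfl
@[simp] lemma permExt_succ (σ : Equiv.Perm (Fin 5)) (i : Fin 5) :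
    permExt σ i.succ = (σ i).succ := by simp [permExt]

lemma permExt_eq_zero_iff (σ : Equiv.Perm (Fin 5)) (m : Fin 6) :
    permExt σ m = 0 ↔ m = 0 := by
  induction m using Fin.cases with
  | zero => simp
  | succ j => simp [Fin.succ_ne_zero]

lemma permExt_eq_succ_iff (σ : Equiv.Perm (Fin 5)) (m : Fin 6) (i : Fin 5) :
    permExt σ m = i.succ ↔ m = (σ.symm i).succ := by
  induction m using Fin.cases with
  | zero => simp [(Fin.succ_ne_zero _).symm, Ne.symm (Fin.succ_ne_zero _)]
  | succ j => simp [Fin.succ_inj, Equiv.apply_eq_iff_eq_symm_apply]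

lemma genA_comp (i : Fin 5) (σ : Equiv.Perm (Fin 5)) (m : Fin 6) :
    genA i (permExt σ m) = genA (σ.symm i) m := by
  simp [genA, permExt_eq_succ_iff]

lemma genC_comp (i j : Fin 5) (σ : Equiv.Perm (Fin 5)) (m : Fin 6) :
    genC i j (permExt σ m) = genC (σ.symm i) (σ.symm j) m := by
  simp [genC, permExt_eq_succ_iff, permExt_eq_zero_iff]

lemma genD_comp (σ : Equiv.Perm (Fin 5)) (m : Fin 6) :
    genD (permExt σ m) = genD m := by
  simp [genD, permExt_eq_zero_iff]

lemma permExt_comp (σ τ : Equiv.Perm (Fin 5)) (m : Fin 6) :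
    permExt σ (permExt τ m) = permExt (σ * τ) m := by
  induction m using Fin.cases with
  | zero => rfl
  | succ j => simp [permExt]

lemma sum_reindex2 (σ : Equiv.Perm (Fin 5)) (f : Fin 5 → Fin 5 → ℝ) :
    ∑ i, ∑ j, f (σ i) (σ j) = ∑ i, ∑ j, f i j := by
  trans (∑ i, ∑ j, f i (σ j))
  · exact Equiv.sum_comp σ (fun i => ∑ j, f i (σ j))
  · exact Finset.sum_congr rfl fun i _ => Equiv.sum_comp σ (fun j => f i j)

lemma InCone_comp (v : Fin 6 → ℝ) (σ : Equiv.Perm (Fin 5))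
    (h : InCone (fun m => v (permExt σ m))) : InCone v := by
  obtain ⟨a, c, e, ha, hc, he, hv⟩ := h
  refine ⟨fun i => a (σ.symm i), fun i j => c (σ.symm i) (σ.symm j), e,
    fun i => ha _, fun i j => hc _ _, he, ?_⟩
  funext m
  have h1 : v (permExt σ (permExt σ⁻¹ m)) =
      ((∑ i, a i • genA i) + (∑ i, ∑ j, c i j • genC i j) + e • genD) (permExt σ⁻¹ m) := by
    rw [congrFun hv (permExt σ⁻¹ m)]
  rw [permExt_comp, mul_inv_cancel] at h1
  have h2 : permExt 1 m = m := by
    induction m using Fin.cases with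
    | zero => rfl
    | succ j => simp [permExt]
  rw [h2] at h1
  rw [h1]
  simp only [Pi.add_apply, Pi.smul_apply, Finset.sum_apply, smul_eq_mul,
    genA_comp, genC_comp, genD_comp]
  have hss : ∀ i : Fin 5, (σ⁻¹ : Equiv.Perm (Fin 5)).symm i = σ i := fun i => rfl
  simp only [hss]
  congr 1
  · congr 1
    · trans (∑ i, (fun i => a (σ.symm i) * genA i m) (σ i))
      · exact Finset.sum_congr rfl fun i _ => by simp
      · exact Equiv.sum_comp σ (fun i => a (σ.symm i) * genA i m)
    · trans (∑ i, ∑ j, (fun i j => c (σ.symm i) (σ.symm j) * genC i j m) (σ i) (σ j))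
      · exact Finset.sum_congr rfl fun i _ => Finset.sum_congr rfl fun j _ => by simp
      · exact sum_reindex2 σ (fun i j => c (σ.symm i) (σ.symm j) * genC i j m)

set_option maxRecDepth 100000 in
set_option maxHeartbeats 1000000 in
lemma cone_iff (v : Fin 6 → ℝ) :
    (∃ (a b : Fin 5 → ℝ) (c : Fin 5 → Fin 5 → ℝ) (e : ℝ),
      (∀ i, 0 ≤ a i) ∧ (∀ i, 0 ≤ b i) ∧ (∀ i j, 0 ≤ c i j) ∧ 0 ≤ e ∧
      v = (∑ i, a i • genA i) + (∑ i, b i • genB i) +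
          (∑ i, ∑ j ∈ Finset.univ.filter (fun j => i < j), c i j • genC i j) + e • genD)
    ↔ InCone v := by
  constructor
  · rintro ⟨a, b, c, e, ha, hb, hc, he, hv⟩
    refine ⟨a, fun i j => if i < j then c i j else if i = j then b i else 0, e,
      ha, fun i j => by dsimp only; split_ifs <;> first | exact hc i j | exact hb i | exact le_rfl, he, ?_⟩
    rw [hv]
    funext m
    fin_cases m <;>
      · simp (config := { decide := true }) [Pi.add_apply, Pi.smul_apply, Finset.sum_apply,
          smul_eq_mul, Finset.sum_filter, Fin.sum_univ_five, genA, genB, genC, genD]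
        ring
  · rintro ⟨a, c, e, ha, hc, he, hv⟩
    refine ⟨a, fun i => c i i, fun i j => c i j + c j i, e,
      ha, fun i => hc i i, fun i j => add_nonneg (hc i j) (hc j i), he, ?_⟩
    rw [hv]
    funext m
    fin_cases m <;>
      · simp (config := { decide := true }) [Pi.add_apply, Pi.smul_apply, Finset.sum_apply,
          smul_eq_mul, Finset.sum_filter, Fin.sum_univ_five, genA, genB, genC, genD]
        ring

noncomputable def pairW (w : Fin 6 → ℝ) : (Fin 6 → ℝ) →ₗ[ℝ] ℝ :=
  ∑ m, w m • LinearMap.proj m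
lemma pairW_apply (w f : Fin 6 → ℝ) : pairW w f = ∑ m, w m * f m := by
  simp [pairW, LinearMap.sum_apply]
lemma cone_pair_nonneg (v : Fin 6 → ℝ) (h : InCone v) (w : Fin 6 → ℝ)
    (hA : ∀ i, 0 ≤ pairW w (genA i))
    (hC : ∀ i j, 0 ≤ pairW w (genC i j))
    (hD : 0 ≤ pairW w genD) : 0 ≤ pairW w v := by
  obtain ⟨a, c, e, ha, hc, he, hv⟩ := h
  rw [hv]
  rw [map_add, map_add, map_sum, map_sum, map_smul]
  simp only [map_sum, map_smul, smul_eq_mul]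
  have h1 : 0 ≤ ∑ i, a i * pairW w (genA i) :=
    Finset.sum_nonneg fun i _ => mul_nonneg (ha i) (hA i)
  have h2 : 0 ≤ ∑ i, ∑ j, c i j * pairW w (genC i j) :=
    Finset.sum_nonneg fun i _ => Finset.sum_nonneg fun j _ => mul_nonneg (hc i j) (hC i j)
  have h3 : 0 ≤ e * pairW w genD := mul_nonneg he hD
  linarith
lemma pigeon3 {α : Type*} {x y z s t : α} (hxy : x ≠ y) (hxz : x ≠ z) (hyz : y ≠ z)
    (h1 : x = s ∨ x = t) (h2 : y = s ∨ y = t) (h3 : z = s ∨ z = t) : False := by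
  rcases h1 with rfl | rfl <;> rcases h2 with rfl | rfl <;> rcases h3 with rfl | rfl <;> simp_all

-- evaluation lemmas
lemma genA_zero (i : Fin 5) : genA i 0 = 0 := if_neg fun h => Fin.succ_ne_zero i h.symm
lemma genA_succ (i t : Fin 5) : genA i t.succ = if t = i then 1 else 0 := by
  simp [genA, Fin.succ_inj]
lemma genC_zero (i j : Fin 5) : genC i j 0 = 1 := if_pos rfl
lemma genC_succ (i j t : Fin 5) : genC i j t.succ = if t = i ∨ t = j then 0 else 1 := by
  simp [genC, Fin.succ_inj, Fin.succ_ne_zero]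
lemma genD_zero : genD 0 = 2 := rfl
lemma genD_succ (t : Fin 5) : genD t.succ = 1 := if_neg (Fin.succ_ne_zero t)

lemma sum_ite_coef (t : Fin 6) (r : ℝ) (f : Fin 6 → ℝ) :
    ∑ m, (if m = t then r else 0) * f m = r * f t := by
  simp [ite_mul]

-- weight vectors
noncomputable def w0 : Fin 6 → ℝ := fun m => if m = 0 then 1 else 0
noncomputable def wP (i : Fin 5) : Fin 6 → ℝ := fun m => if m = i.succ then 1 else 0
noncomputable def wT (i j k : Fin 5) : Fin 6 → ℝ := fun m =>
  (if m = i.succ then 1 else 0) + (if m = j.succ then 1 else 0)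
    + (if m = k.succ then 1 else 0) + (if m = 0 then (-1) else 0)
noncomputable def wQ (i j k l : Fin 5) : Fin 6 → ℝ := fun m =>
  (if m = i.succ then 1 else 0) + (if m = j.succ then 1 else 0)
    + (if m = k.succ then 1 else 0) + (if m = l.succ then 1 else 0)
    + (if m = 0 then (-2) else 0)
noncomputable def wL (i : Fin 5) : Fin 6 → ℝ := fun m =>
  (if m = i.succ then 1 else 0) + (if m = 0 then (-3) else 1)

lemma w0_apply (f : Fin 6 → ℝ) : pairW w0 f = f 0 := by
  rw [pairW_apply]; simp [w0, ite_mul]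
lemma wP_apply (i : Fin 5) (f : Fin 6 → ℝ) : pairW (wP i) f = f i.succ := by
  rw [pairW_apply]; simp [wP, ite_mul]
lemma wT_apply (i j k : Fin 5) (f : Fin 6 → ℝ) :
    pairW (wT i j k) f = f i.succ + f j.succ + f k.succ - f 0 := by
  rw [pairW_apply]
  simp only [wT, add_mul, Finset.sum_add_distrib, sum_ite_coef]
  ring
lemma wQ_apply (i j k l : Fin 5) (f : Fin 6 → ℝ) :
    pairW (wQ i j k l) f = f i.succ + f j.succ + f k.succ + f l.succ - 2 * f 0 := by
  rw [pairW_apply]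
  simp only [wQ, add_mul, Finset.sum_add_distrib, sum_ite_coef]
  ring
lemma sum_wtail (f : Fin 6 → ℝ) :
    ∑ m, (if m = 0 then (-3:ℝ) else 1) * f m = -3 * f 0 + f 1 + f 2 + f 3 + f 4 + f 5 := by
  simp (config := { decide := true }) [Fin.sum_univ_six]
lemma wL_apply (i : Fin 5) (f : Fin 6 → ℝ) :
    pairW (wL i) f = f i.succ + (-3 * f 0 + f 1 + f 2 + f 3 + f 4 + f 5) := by
  rw [pairW_apply]
  simp only [wL, add_mul, Finset.sum_add_distrib, sum_ite_coef, sum_wtail]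
  ring

lemma tripC (i j k s t : Fin 5) (hij : i ≠ j) (hik : i ≠ k) (hjk : j ≠ k) :
    0 ≤ (if i = s ∨ i = t then (0:ℝ) else 1) + (if j = s ∨ j = t then 0 else 1)
      + (if k = s ∨ k = t then 0 else 1) - 1 := by
  by_cases h1 : i = s ∨ i = t <;> by_cases h2 : j = s ∨ j = t <;>
    by_cases h3 : k = s ∨ k = t <;>
    simp only [h1, h2, h3, if_true, if_false] <;>
    first
      | exact (pigeon3 hij hik hjk h1 h2 h3).elim
      | norm_num
lemma quadC (i j k l s t : Fin 5) (hij : i ≠ j) (hik : i ≠ k) (hil : i ≠ l)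
    (hjk : j ≠ k) (hjl : j ≠ l) (hkl : k ≠ l) :
    0 ≤ (if i = s ∨ i = t then (0:ℝ) else 1) + (if j = s ∨ j = t then 0 else 1)
      + (if k = s ∨ k = t then 0 else 1) + (if l = s ∨ l = t then 0 else 1) - 2 := by
  by_cases h1 : i = s ∨ i = t <;> by_cases h2 : j = s ∨ j = t <;>
    by_cases h3 : k = s ∨ k = t <;> by_cases h4 : l = s ∨ l = t <;>
    simp only [h1, h2, h3, h4, if_true, if_false] <;>
    first
      | exact (pigeon3 hij hik hjk h1 h2 h3).elim
      | exact (pigeon3 hij hil hjl h1 h2 h4).elim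
      | exact (pigeon3 hik hil hkl h1 h3 h4).elim
      | exact (pigeon3 hjk hjl hkl h2 h3 h4).elim
      | norm_num

lemma InCone_to_ineqs (v : Fin 6 → ℝ) (h : InCone v) :
    0 ≤ v 0 ∧ (∀ i : Fin 5, 0 ≤ v i.succ) ∧
      (∀ i j k : Fin 5, i ≠ j → i ≠ k → j ≠ k →
        v 0 ≤ v i.succ + v j.succ + v k.succ) ∧
      (∀ i j k l : Fin 5, i ≠ j → i ≠ k → i ≠ l → j ≠ k → j ≠ l → k ≠ l →
        2 * v 0 ≤ v i.succ + v j.succ + v k.succ + v l.succ) ∧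
      (∀ i : Fin 5, 3 * v 0 ≤ 2 * v i.succ + ∑ j ∈ Finset.univ.erase i, v j.succ) := by
  refine ⟨?_, ?_, ?_, ?_, ?_⟩
  · have := cone_pair_nonneg v h w0 (fun i => ?_) (fun i j => ?_) ?_
    · rwa [w0_apply] at this
    · rw [w0_apply, genA_zero]
    · rw [w0_apply, genC_zero]; norm_num
    · rw [w0_apply, genD_zero]; norm_num
  · intro i
    have := cone_pair_nonneg v h (wP i) (fun t => ?_) (fun s t => ?_) ?_
    · rwa [wP_apply] at this
    · rw [wP_apply, genA_succ]; split_ifs <;> norm_num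
    · rw [wP_apply, genC_succ]; split_ifs <;> norm_num
    · rw [wP_apply, genD_succ]; norm_num
  · intro i j k hij hik hjk
    have := cone_pair_nonneg v h (wT i j k) (fun t => ?_) (fun s t => ?_) ?_
    · rw [wT_apply] at this; linarith
    · rw [wT_apply, genA_zero, genA_succ, genA_succ, genA_succ]
      split_ifs <;> norm_num
    · rw [wT_apply, genC_zero, genC_succ, genC_succ, genC_succ]
      exact tripC i j k s t hij hik hjk
    · rw [wT_apply, genD_zero, genD_succ, genD_succ, genD_succ]; norm_num
  · intro i j k l hij hik hil hjk hjl hkl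
    have := cone_pair_nonneg v h (wQ i j k l) (fun t => ?_) (fun s t => ?_) ?_
    · rw [wQ_apply] at this; linarith
    · rw [wQ_apply, genA_zero, genA_succ, genA_succ, genA_succ, genA_succ]
      split_ifs <;> norm_num
    · rw [wQ_apply, genC_zero, genC_succ, genC_succ, genC_succ, genC_succ]
      have := quadC i j k l s t hij hik hil hjk hjl hkl; linarith
    · rw [wQ_apply, genD_zero, genD_succ, genD_succ, genD_succ, genD_succ]; norm_num
  · intro i
    have hsum : ∑ j ∈ Finset.univ.erase i, v j.succ
        = (∑ j : Fin 5, v j.succ) - v i.succ :=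
      Finset.sum_erase_eq_sub (Finset.mem_univ i)
    have hfive : (∑ j : Fin 5, v j.succ) = v 1 + v 2 + v 3 + v 4 + v 5 := by
      rw [Fin.sum_univ_five]
      norm_num [show (0:Fin 5).succ = (1:Fin 6) from rfl, show (1:Fin 5).succ = (2:Fin 6) from rfl,
        show (2:Fin 5).succ = (3:Fin 6) from rfl, show (3:Fin 5).succ = (4:Fin 6) from rfl,
        show (4:Fin 5).succ = (5:Fin 6) from rfl]
    have := cone_pair_nonneg v h (wL i) (fun t => ?_) (fun s t => ?_) ?_
    · rw [wL_apply] at this; rw [hsum, hfive]; linarith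
    · rw [wL_apply, genA_zero]
      fin_cases t <;>
        simp (config := { decide := true }) [genA] <;> split_ifs <;> norm_num
    · rw [wL_apply, genC_zero]
      fin_cases s <;> fin_cases t <;>
        simp (config := { decide := true }) [genC] <;> split_ifs <;> norm_num
    · rw [wL_apply, genD_zero]
      simp (config := { decide := true }) [genD, Fin.succ_ne_zero]
      norm_num

set_option maxRecDepth 100000 in
set_option maxHeartbeats 1000000 in
lemma sorted_InCone (v : Fin 6 → ℝ)
    (h0 : 0 ≤ v 0) (h1 : 0 ≤ v 1)
    (h12 : v 1 ≤ v 2) (h23 : v 2 ≤ v 3) (h34 : v 3 ≤ v 4) (h45 : v 4 ≤ v 5)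
    (hT : v 0 ≤ v 1 + v 2 + v 3)
    (hQ : 2 * v 0 ≤ v 1 + v 2 + v 3 + v 4)
    (hR : 3 * v 0 ≤ 2 * v 1 + v 2 + v 3 + v 4 + v 5) : InCone v := by
  obtain ⟨e, he0, heS, h2e, he1, heup⟩ :
      ∃ e : ℝ, 0 ≤ e ∧ 3 * v 0 - (v 1 + v 2 + v 3 + v 4 + v 5) ≤ e ∧ 2 * e ≤ v 0 ∧ e ≤ v 1 ∧
        v 0 + e ≤ v 1 + v 2 + v 3 := by
    refine ⟨max 0 (3 * v 0 - (v 1 + v 2 + v 3 + v 4 + v 5)), le_max_left _ _,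
      le_max_right _ _, ?_, max_le h1 (by linarith), ?_⟩ <;>
    rcases max_cases 0 (3 * v 0 - (v 1 + v 2 + v 3 + v 4 + v 5)) with ⟨hm, _⟩ | ⟨hm, _⟩ <;>
      rw [hm] <;> linarith
  have he2 : e ≤ v 2 := le_trans he1 h12
  have he3 : e ≤ v 3 := le_trans he2 h23
  have he4 : e ≤ v 4 := le_trans he3 h34
  have he5 : e ≤ v 5 := le_trans he4 h45
  obtain ⟨r1, r2, r3, r4, r5, hr10, hr20, hr30, hr40, hr50,
      hr1v, hr2v, hr3v, hr4v, hr5v, hr12, hr23, hr34, hr45, hr1L, hsum⟩ :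
      ∃ r1 r2 r3 r4 r5 : ℝ,
        0 ≤ r1 ∧ 0 ≤ r2 ∧ 0 ≤ r3 ∧ 0 ≤ r4 ∧ 0 ≤ r5 ∧
        v 0 - e - v 1 ≤ r1 ∧ v 0 - e - v 2 ≤ r2 ∧ v 0 - e - v 3 ≤ r3 ∧
        v 0 - e - v 4 ≤ r4 ∧ v 0 - e - v 5 ≤ r5 ∧
        r2 ≤ r1 ∧ r3 ≤ r2 ∧ r4 ≤ r3 ∧ r5 ≤ r4 ∧
        r1 ≤ v 0 - 2 * e ∧
        r1 + r2 + r3 + r4 + r5 ≤ 2 * (v 0 - 2 * e) := by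
    refine ⟨max 0 (v 0 - e - v 1), max 0 (v 0 - e - v 2), max 0 (v 0 - e - v 3),
      max 0 (v 0 - e - v 4), max 0 (v 0 - e - v 5),
      le_max_left _ _, le_max_left _ _, le_max_left _ _, le_max_left _ _, le_max_left _ _,
      le_max_right _ _, le_max_right _ _, le_max_right _ _, le_max_right _ _, le_max_right _ _,
      max_le_max le_rfl (by linarith), max_le_max le_rfl (by linarith),
      max_le_max le_rfl (by linarith), max_le_max le_rfl (by linarith),
      max_le (by linarith) (by linarith), ?_⟩
    rcases max_cases 0 (v 0 - e - v 1) with ⟨hm1, hn1⟩ | ⟨hm1, hn1⟩ <;>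
      rcases max_cases 0 (v 0 - e - v 2) with ⟨hm2, hn2⟩ | ⟨hm2, hn2⟩ <;>
      rcases max_cases 0 (v 0 - e - v 3) with ⟨hm3, hn3⟩ | ⟨hm3, hn3⟩ <;>
      rcases max_cases 0 (v 0 - e - v 4) with ⟨hm4, hn4⟩ | ⟨hm4, hn4⟩ <;>
      rcases max_cases 0 (v 0 - e - v 5) with ⟨hm5, hn5⟩ | ⟨hm5, hn5⟩ <;>
      rw [hm1, hm2, hm3, hm4, hm5] <;> linarith
  rcases le_total (r2 + r3 + r4 + r5) r1 with hA | hB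
  · -- star case
    refine ⟨fun k => if k = 0 then v 1 - e
        else if k = 1 then v 2 - v 0 + e + r2
        else if k = 2 then v 3 - v 0 + e + r3
        else if k = 3 then v 4 - v 0 + e + r4
        else v 5 - v 0 + e + r5,
      fun i j => if i = 0 then
          (if j = 0 then (v 0 - 2 * e) - (r2 + r3 + r4 + r5)
           else if j = 1 then r2 else if j = 2 then r3 else if j = 3 then r4 else r5)
        else 0,
      e, ?_, ?_, he0, ?_⟩
    · intro k; fin_cases k <;> simp (config := { decide := true }) <;> linarith
    · intro i j; fin_cases i <;> fin_cases j <;>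
        simp (config := { decide := true }) <;> linarith
    · funext m
      fin_cases m <;>
        (simp (config := { decide := true }) [Pi.add_apply, Pi.smul_apply, Finset.sum_apply,
            smul_eq_mul, Fin.sum_univ_five, genA, genC, genD]
         try ring)
  · -- matching case
    obtain ⟨α, hα0, hα3, hαΔ, hαlow⟩ :
        ∃ α : ℝ, 0 ≤ α ∧ α ≤ r3 ∧ α ≤ (r2 + r3 + r4 + r5 - r1) / 2 ∧
          (r2 + r3 + r4 + r5 - r1) / 2 - r5 ≤ α := by
      refine ⟨min r3 ((r2 + r3 + r4 + r5 - r1) / 2), le_min hr30 (by linarith),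
        min_le_left _ _, min_le_right _ _, le_min (by linarith) (by linarith)⟩
    refine ⟨fun k => if k = 0 then v 1 - v 0 + e + r1
        else if k = 1 then v 2 - v 0 + e + r2
        else if k = 2 then v 3 - v 0 + e + r3
        else if k = 3 then v 4 - v 0 + e + r4
        else v 5 - v 0 + e + r5 + ((v 0 - 2 * e) - (r1 + r2 + r3 + r4 + r5) / 2),
      fun i j => if i = 0 then
          (if j = 1 then r2 - α else if j = 2 then r3 - α
           else if j = 3 then r4 - ((r2 + r3 + r4 + r5 - r1) / 2 - α)
           else if j = 4 then r5 - ((r2 + r3 + r4 + r5 - r1) / 2 - α) else 0)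
        else if i = 1 then (if j = 2 then α else 0)
        else if i = 3 then (if j = 4 then (r2 + r3 + r4 + r5 - r1) / 2 - α else 0)
        else if i = 4 then (if j = 4 then (v 0 - 2 * e) - (r1 + r2 + r3 + r4 + r5) / 2 else 0)
        else 0,
      e, ?_, ?_, he0, ?_⟩
    · intro k; fin_cases k <;> simp (config := { decide := true }) <;> linarith
    · intro i j; fin_cases i <;> fin_cases j <;>
        simp (config := { decide := true }) <;> linarith
    · funext m
      fin_cases m <;>
        (simp (config := { decide := true }) [Pi.add_apply, Pi.smul_apply, Finset.sum_apply,
            smul_eq_mul, Fin.sum_univ_five, genA, genC, genD]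
         try ring)

lemma ineqs_to_InCone (v : Fin 6 → ℝ)
    (h0 : 0 ≤ v 0) (hpos : ∀ i : Fin 5, 0 ≤ v i.succ)
    (htrip : ∀ i j k : Fin 5, i ≠ j → i ≠ k → j ≠ k →
      v 0 ≤ v i.succ + v j.succ + v k.succ)
    (hquad : ∀ i j k l : Fin 5, i ≠ j → i ≠ k → i ≠ l → j ≠ k → j ≠ l → k ≠ l →
      2 * v 0 ≤ v i.succ + v j.succ + v k.succ + v l.succ)
    (hlast : ∀ i : Fin 5, 3 * v 0 ≤ 2 * v i.succ + ∑ j ∈ Finset.univ.erase i, v j.succ) :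
    InCone v := by
  set σ := Tuple.sort (fun i : Fin 5 => v i.succ) with hσ
  have hmono : Monotone ((fun i : Fin 5 => v i.succ) ∘ σ) := Tuple.monotone_sort _
  apply InCone_comp v σ
  have hp : ∀ k : Fin 5, v (permExt σ k.succ) = v (σ k).succ := by
    intro k; rw [permExt_succ]
  have e1 : (1 : Fin 6) = (0 : Fin 5).succ := rfl
  have e2 : (2 : Fin 6) = (1 : Fin 5).succ := rfl
  have e3 : (3 : Fin 6) = (2 : Fin 5).succ := rfl
  have e4 : (4 : Fin 6) = (3 : Fin 5).succ := rfl
  have e5 : (5 : Fin 6) = (4 : Fin 5).succ := rfl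
  have hne : ∀ (i j : Fin 5), i ≠ j → σ i ≠ σ j := fun i j hij => fun h => hij (σ.injective h)
  apply sorted_InCone (fun m => v (permExt σ m))
  · exact h0
  · rw [e1, hp]; exact hpos _
  · rw [e1, e2, hp, hp]; exact hmono (by decide : (0:Fin 5) ≤ 1)
  · rw [e2, e3, hp, hp]; exact hmono (by decide : (1:Fin 5) ≤ 2)
  · rw [e3, e4, hp, hp]; exact hmono (by decide : (2:Fin 5) ≤ 3)
  · rw [e4, e5, hp, hp]; exact hmono (by decide : (3:Fin 5) ≤ 4)
  · rw [e1, e2, e3, hp, hp, hp]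
    exact htrip _ _ _ (hne _ _ (by decide)) (hne _ _ (by decide)) (hne _ _ (by decide))
  · rw [e1, e2, e3, e4, hp, hp, hp, hp]
    exact hquad _ _ _ _ (hne _ _ (by decide)) (hne _ _ (by decide)) (hne _ _ (by decide))
      (hne _ _ (by decide)) (hne _ _ (by decide)) (hne _ _ (by decide))
  · rw [e1, e2, e3, e4, e5, hp, hp, hp, hp, hp]
    have herase : ∑ j ∈ Finset.univ.erase (σ 0), v j.succ
        = (∑ j : Fin 5, v j.succ) - v (σ 0).succ :=
      Finset.sum_erase_eq_sub (Finset.mem_univ _)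
    have hcomp : ∑ i : Fin 5, v (σ i).succ = ∑ j : Fin 5, v j.succ :=
      Equiv.sum_comp σ (fun j => v j.succ)
    have hexp : ∑ i : Fin 5, v (σ i).succ
        = v (σ 0).succ + v (σ 1).succ + v (σ 2).succ + v (σ 3).succ + v (σ 4).succ :=
      Fin.sum_univ_five _
    have := hlast (σ 0)
    rw [herase] at this
    simp only [permExt_zero]
    linarith


/-- Proposition 2.6: a vector `v = (d0, d1, …, d5) ∈ ℝ⁶` is a finite nonnegative linear
combination of the 21 vectors `genA i` (5 of them), `genB i` (5), `genC i j` for `i < j`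
(10), and `genD` (1), if and only if `d0 ≥ 0`, `dᵢ ≥ 0`, `dᵢ + dⱼ + dₖ ≥ d0` for pairwise
distinct `i,j,k`, `dᵢ + dⱼ + dₖ + dₗ ≥ 2 d0` for pairwise distinct `i,j,k,l`, and
`2 dᵢ + ∑_{j ≠ i} dⱼ ≥ 3 d0` for each `i`. -/
theorem stmt11 (v : Fin 6 → ℝ) :
    (∃ (a b : Fin 5 → ℝ) (c : Fin 5 → Fin 5 → ℝ) (e : ℝ),
      (∀ i, 0 ≤ a i) ∧ (∀ i, 0 ≤ b i) ∧ (∀ i j, 0 ≤ c i j) ∧ 0 ≤ e ∧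
      v = (∑ i, a i • genA i) + (∑ i, b i • genB i) +
          (∑ i, ∑ j ∈ Finset.univ.filter (fun j => i < j), c i j • genC i j) + e • genD)
    ↔ (0 ≤ v 0 ∧ (∀ i : Fin 5, 0 ≤ v i.succ) ∧
       (∀ i j k : Fin 5, i ≠ j → i ≠ k → j ≠ k →
          v 0 ≤ v i.succ + v j.succ + v k.succ) ∧
       (∀ i j k l : Fin 5, i ≠ j → i ≠ k → i ≠ l → j ≠ k → j ≠ l → k ≠ l →
          2 * v 0 ≤ v i.succ + v j.succ + v k.succ + v l.succ) ∧
       (∀ i : Fin 5, 3 * v 0 ≤ 2 * v i.succ + ∑ j ∈ Finset.univ.erase i, v j.succ)) := by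
  rw [cone_iff]
  constructor
  · exact InCone_to_ineqs v
  · rintro ⟨h0, hpos, htrip, hquad, hlast⟩
    exact ineqs_to_InCone v h0 hpos htrip hquad hlast
end

section
/- Let D > 1 be an integer, let j be an integer with 1 ≤ j ≤ D − 1, let σ be any integer, and let F be any function from the positive integers to an abelian group. Then ∑_{k ∣ D} μ(D/k) · (−1)^{σ·k·(j+1)} · F(gcd(k, j)) = 0. -/
open scoped BigOperators

open Finset

open ArithmeticFunction ArithmeticFunction.Moebius ArithmeticFunction.zeta in
private lemma odd_of_dvd_odd {m n : ℕ} (h : m ∣ n) (hn : Odd n) : Odd m := by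
  rw [Nat.odd_iff] at hn ⊢
  by_contra hm
  have h2 : (2 : ℕ) ∣ m := by omega
  have h3 : (2 : ℕ) ∣ n := h2.trans h
  omega

open ArithmeticFunction ArithmeticFunction.Moebius ArithmeticFunction.zeta in
private lemma moebius_div_sum_eq_zero (M : ℕ) (h0 : M ≠ 0) (h1 : M ≠ 1) :
    ∑ m ∈ M.divisors, (μ (M / m) : ℤ) = 0 := by
  have h : (μ * ζ : ArithmeticFunction ℤ) M = (1 : ArithmeticFunction ℤ) M := by
    rw [moebius_mul_coe_zeta]
  rw [mul_apply, Nat.sum_divisorsAntidiagonal' (f := fun a b => (μ a : ℤ) * (ζ : ArithmeticFunction ℤ) b),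
    one_apply, if_neg h1] at h
  rw [← h]
  refine Finset.sum_congr rfl fun i hi => ?_
  have hi0 : i ≠ 0 := (Nat.pos_of_mem_divisors hi).ne'
  simp [hi0]

open ArithmeticFunction ArithmeticFunction.Moebius ArithmeticFunction.zeta in
private lemma moebius_div_sum_neg_one_pow (M : ℕ) (h0 : M ≠ 0) (h1 : M ≠ 1) (h2 : M ≠ 2) :
    ∑ m ∈ M.divisors, (μ (M / m) : ℤ) * (-1 : ℤ) ^ m = 0 := by
  rcases Nat.even_or_odd M with hM | hM
  · -- M even
    set a := M.factorization 2 with ha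
    set u := ordCompl[2] M with hu
    have hMu : 2 ^ a * u = M := Nat.ordProj_mul_ordCompl_eq_self M 2
    have hu0 : u ≠ 0 := (Nat.ordCompl_pos 2 h0).ne'
    have huodd : Odd u := by
      have := Nat.not_dvd_ordCompl Nat.prime_two h0
      rw [Nat.odd_iff]
      omega
    have ha1 : 1 ≤ a := by
      have : (2 : ℕ) ∣ M := hM.two_dvd
      exact (Nat.Prime.factorization_pos_of_dvd Nat.prime_two h0 this)
    have split : ∑ m ∈ M.divisors, (μ (M / m) : ℤ) * (-1 : ℤ) ^ m =
        ∑ m ∈ M.divisors, (μ (M / m) : ℤ) +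
          ∑ m ∈ M.divisors, (if Odd m then (-2) * (μ (M / m) : ℤ) else 0) := by
      rw [← Finset.sum_add_distrib]
      refine Finset.sum_congr rfl fun m hm => ?_
      rcases Nat.even_or_odd m with hme | hmo
      · rw [hme.neg_one_pow, if_neg (Nat.not_odd_iff_even.mpr hme)]
        ring
      · rw [hmo.neg_one_pow, if_pos hmo]
        ring
    rw [split, moebius_div_sum_eq_zero M h0 h1, zero_add, ← Finset.sum_filter]
    have hfil : M.divisors.filter (fun m => Odd m) = u.divisors := by
      ext m
      simp only [Finset.mem_filter, Nat.mem_divisors]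
      constructor
      · rintro ⟨⟨hmM, -⟩, hmo⟩
        refine ⟨?_, hu0⟩
        have hcop : Nat.Coprime m (2 ^ a) :=
          (Nat.coprime_two_right.mpr hmo).pow_right a
        exact hcop.dvd_of_dvd_mul_left (hMu ▸ hmM)
      · rintro ⟨hmu, -⟩
        exact ⟨⟨hmu.trans (Dvd.intro_left _ hMu), h0⟩, odd_of_dvd_odd hmu huodd⟩
    rw [hfil]
    have hdiv : ∀ m ∈ u.divisors, M / m = 2 ^ a * (u / m) := fun m hm => by
      obtain ⟨hmu, -⟩ := Nat.mem_divisors.mp hm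
      rw [← hMu, Nat.mul_div_assoc _ hmu]
    rcases Nat.lt_or_ge a 2 with ha2 | ha2
    · -- a = 1
      have haa : a = 1 := by omega
      have hu1 : u ≠ 1 := by
        intro h
        rw [h, haa] at hMu
        omega
      have : ∀ m ∈ u.divisors, (-2) * (μ (M / m) : ℤ) = 2 * (μ (u / m) : ℤ) := fun m hm => by
        have hodd : Odd (u / m) := odd_of_dvd_odd (Nat.div_dvd_of_dvd (Nat.mem_divisors.mp hm).1) huodd
        have hcop : Nat.Coprime 2 (u / m) := Nat.coprime_two_left.mpr hodd
        rw [hdiv m hm, haa, pow_one, isMultiplicative_moebius.map_mul_of_coprime hcop,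
          moebius_apply_prime Nat.prime_two]
        ring
      rw [Finset.sum_congr rfl this, ← Finset.mul_sum,
        moebius_div_sum_eq_zero u hu0 hu1, mul_zero]
    · -- a ≥ 2 : each μ (M/m) = 0
      refine Finset.sum_eq_zero fun m hm => ?_
      have : μ (M / m) = 0 := by
        apply moebius_eq_zero_of_not_squarefree
        intro hs
        have h4 : 2 * 2 ∣ M / m := by
          rw [hdiv m hm]
          exact Dvd.dvd.mul_right (by
            have : 2 * 2 ∣ 2 ^ a := by
              have : 2 ^ 2 ∣ 2 ^ a := pow_dvd_pow 2 ha2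
              simpa [pow_two] using this
            exact this) _
        have := hs 2 h4
        simp [Nat.isUnit_iff] at this
      rw [this]
      simp
  · -- M odd
    have : ∀ m ∈ M.divisors, (μ (M / m) : ℤ) * (-1 : ℤ) ^ m = -(μ (M / m) : ℤ) := fun m hm => by
      have hmo : Odd m := odd_of_dvd_odd (Nat.mem_divisors.mp hm).1 hM
      rw [hmo.neg_one_pow]
      ring
    rw [Finset.sum_congr rfl this, Finset.sum_neg_distrib,
      moebius_div_sum_eq_zero M h0 h1, neg_zero]

open ArithmeticFunction ArithmeticFunction.Moebius ArithmeticFunction.zeta in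
private lemma main_aux {A : Type*} [AddCommGroup A] (D j : ℕ) (hD0 : D ≠ 0) (hj0 : j ≠ 0)
    (c : ℕ → ℤ) (F : ℕ → A)
    (hc : ∀ i, i ∣ j → i ∣ D → ∑ m ∈ (D / i).divisors, c (i * m) = 0) :
    ∑ k ∈ D.divisors, c k • F (Nat.gcd k j) = 0 := by
  classical
  set G : ℕ → A := fun n => ∑ x ∈ n.divisorsAntidiagonal, μ x.1 • F x.2 with hGdef
  have hFG : ∀ n > 0, ∑ i ∈ n.divisors, G i = F n :=
    ArithmeticFunction.sum_eq_iff_sum_smul_moebius_eq.mpr fun n _ => rfl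
  calc ∑ k ∈ D.divisors, c k • F (Nat.gcd k j)
      = ∑ k ∈ D.divisors, ∑ i ∈ j.divisors.filter (· ∣ k), c k • G i := by
        refine Finset.sum_congr rfl fun k hk => ?_
        have hk0 : 0 < k := Nat.pos_of_mem_divisors hk
        have hgcd0 : 0 < Nat.gcd k j := Nat.gcd_pos_of_pos_left _ hk0
        have hset : (Nat.gcd k j).divisors = j.divisors.filter (· ∣ k) := by
          ext i
          simp only [Finset.mem_filter, Nat.mem_divisors, Nat.dvd_gcd_iff]
          constructor
          · rintro ⟨⟨h1, h2⟩, -⟩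
            exact ⟨⟨h2, hj0⟩, h1⟩
          · rintro ⟨⟨h1, -⟩, h2⟩
            exact ⟨⟨h2, h1⟩, hgcd0.ne'⟩
        rw [← hFG _ hgcd0, hset, Finset.smul_sum]
    _ = ∑ i ∈ j.divisors, ∑ k ∈ D.divisors.filter (fun k => i ∣ k), c k • G i := by
        simp_rw [Finset.sum_filter]
        exact Finset.sum_comm
    _ = 0 := by
        refine Finset.sum_eq_zero fun i hi => ?_
        obtain ⟨hij, -⟩ := Nat.mem_divisors.mp hi
        rw [← Finset.sum_smul]
        by_cases hiD : i ∣ D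
        · have hi0 : i ≠ 0 := fun h => hj0 (by simpa [h, zero_dvd_iff] using hij)
          have hreind : ∑ k ∈ D.divisors.filter (fun k => i ∣ k), c k
              = ∑ m ∈ (D / i).divisors, c (i * m) := by
            refine Finset.sum_nbij' (fun k => k / i) (fun m => i * m) ?_ ?_ ?_ ?_ ?_
            · intro k hk
              rw [Finset.mem_filter, Nat.mem_divisors] at hk
              obtain ⟨⟨hkD, -⟩, hik⟩ := hk
              refine Nat.mem_divisors.mpr ⟨?_, ?_⟩
              · obtain ⟨m, rfl⟩ := hik
                show i * m / i ∣ D / i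
                rw [Nat.mul_div_cancel_left m (Nat.pos_of_ne_zero hi0)]
                exact (Nat.dvd_div_iff_mul_dvd hiD).mpr hkD
              · exact (Nat.div_pos (Nat.le_of_dvd (Nat.pos_of_ne_zero hD0) hiD)
                  (Nat.pos_of_ne_zero hi0)).ne'
            · intro m hm
              obtain ⟨hm1, -⟩ := Nat.mem_divisors.mp hm
              refine Finset.mem_filter.mpr ⟨Nat.mem_divisors.mpr ⟨?_, hD0⟩, dvd_mul_right i m⟩
              exact (Nat.dvd_div_iff_mul_dvd hiD).mp hm1
            · intro k hk
              exact Nat.mul_div_cancel' (Finset.mem_filter.mp hk).2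
            · intro m hm
              exact Nat.mul_div_cancel_left m (Nat.pos_of_ne_zero hi0)
            · intro k hk
              rw [Nat.mul_div_cancel' (Finset.mem_filter.mp hk).2]
          rw [hreind, hc i hij hiD, zero_smul]
        · rw [Finset.sum_eq_zero, zero_smul]
          intro k hk
          rw [Finset.mem_filter] at hk
          exact absurd (hk.2.trans (Nat.mem_divisors.mp hk.1).1) hiD

/-- The divisor-sum cancellation at the arithmetic core of the proof of Theorem 7.1:
for an integer `D > 1`, `1 ≤ j ≤ D - 1`, any integer `σ`, and any function `F` from the
positive integers to an abelian group,
`∑_{k ∣ D} μ(D/k) (-1)^{σ k (j+1)} F(gcd(k, j)) = 0`. -/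
theorem stmt16 {A : Type*} [AddCommGroup A] (D : ℕ) (hD : 1 < D)
    (j : ℕ) (hj1 : 1 ≤ j) (hj2 : j ≤ D - 1) (σ : ℤ) (F : ℕ → A) :
    ∑ k ∈ D.divisors,
      (ArithmeticFunction.moebius (D / k) *
          (((-1 : ℤˣ) ^ (σ * (k : ℤ) * ((j : ℤ) + 1)) : ℤˣ) : ℤ)) • F (Nat.gcd k j)
      = 0 := by
  have hD0 : D ≠ 0 := by omega
  have hj0 : j ≠ 0 := by omega
  have hjD : j < D := by omega
  have hM : ∀ i : ℕ, i ∣ j → i ∣ D → D / i ≠ 0 ∧ D / i ≠ 1 := by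
    intro i hij hiD
    have hi0 : i ≠ 0 := fun h => hj0 (by simpa [h, zero_dvd_iff] using hij)
    constructor
    · exact (Nat.div_pos (Nat.le_of_dvd (by omega) hiD) (Nat.pos_of_ne_zero hi0)).ne'
    · intro h
      have hDi : D = i * 1 := Nat.eq_mul_of_div_eq_right hiD h
      have := Nat.le_of_dvd (by omega) hij
      omega
  rcases Int.even_or_odd (σ * ((j : ℤ) + 1)) with hpar | hpar
  · -- even exponent case : the unit is 1
    have hunit : ∀ k : ℕ, (((-1 : ℤˣ) ^ (σ * (k : ℤ) * ((j : ℤ) + 1)) : ℤˣ) : ℤ) = 1 := by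
      intro k
      have he : Even (σ * (k : ℤ) * ((j : ℤ) + 1)) := by
        have h2 : σ * (k : ℤ) * ((j : ℤ) + 1) = (σ * ((j : ℤ) + 1)) * k := by ring
        rw [h2]
        exact hpar.mul_right _
      rw [he.neg_one_zpow, Units.val_one]
    have := main_aux D j hD0 hj0 (fun k => (ArithmeticFunction.moebius (D / k) : ℤ)) F (by
      intro i hij hiD
      obtain ⟨hM0, hM1⟩ := hM i hij hiD
      have hcongr : ∀ m ∈ (D / i).divisors, (ArithmeticFunction.moebius (D / (i * m)) : ℤ) = (ArithmeticFunction.moebius (D / i / m) : ℤ) := by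
        intro m hm
        rw [Nat.div_div_eq_div_mul]
      rw [Finset.sum_congr rfl hcongr]
      exact moebius_div_sum_eq_zero _ hM0 hM1)
    rw [← this]
    refine Finset.sum_congr rfl fun k _ => ?_
    rw [hunit k, mul_one]
  · -- odd exponent case : the unit is (-1)^k
    obtain ⟨hσodd, hjodd⟩ := Int.odd_mul.mp hpar
    have hjeven : Even j := by
      have h1 : Even ((j : ℤ)) := by
        obtain ⟨t, ht⟩ := hjodd
        exact ⟨t, by omega⟩
      exact_mod_cast h1
    have hunit : ∀ k : ℕ,
        (((-1 : ℤˣ) ^ (σ * (k : ℤ) * ((j : ℤ) + 1)) : ℤˣ) : ℤ) = (-1 : ℤ) ^ k := by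
      intro k
      rcases Nat.even_or_odd k with hk | hk
      · have he : Even (σ * (k : ℤ) * ((j : ℤ) + 1)) := by
          have hkZ : Even ((k : ℤ)) := by exact_mod_cast hk
          have h2 : σ * (k : ℤ) * ((j : ℤ) + 1) = (k : ℤ) * (σ * ((j : ℤ) + 1)) := by ring
          rw [h2]
          exact hkZ.mul_right _
        rw [he.neg_one_zpow, Units.val_one, hk.neg_one_pow]
      · have hkZ : Odd ((k : ℤ)) := by exact_mod_cast hk
        have ho : Odd (σ * (k : ℤ) * ((j : ℤ) + 1)) := (hσodd.mul hkZ).mul hjodd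
        obtain ⟨t, ht⟩ := ho
        have h1 : ((-1 : ℤˣ) ^ (σ * (k : ℤ) * ((j : ℤ) + 1))) = -1 := by
          rw [ht, zpow_add, zpow_one, zpow_mul]
          rw [show ((-1 : ℤˣ) ^ (2 : ℤ)) = 1 from by rw [zpow_two]; simp]
          simp
        rw [h1, hk.neg_one_pow]
        simp
    have := main_aux D j hD0 hj0 (fun k => (ArithmeticFunction.moebius (D / k) : ℤ) * (-1 : ℤ) ^ k) F (by
      intro i hij hiD
      obtain ⟨hM0, hM1⟩ := hM i hij hiD
      rcases Nat.even_or_odd i with hie | hio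
      · -- i even : (-1)^(i*m) = 1
        have hcongr : ∀ m ∈ (D / i).divisors,
            (ArithmeticFunction.moebius (D / (i * m)) : ℤ) * (-1 : ℤ) ^ (i * m) = (ArithmeticFunction.moebius (D / i / m) : ℤ) := by
          intro m hm
          rw [Nat.div_div_eq_div_mul, (hie.mul_right m).neg_one_pow, mul_one]
        rw [Finset.sum_congr rfl hcongr]
        exact moebius_div_sum_eq_zero _ hM0 hM1
      · -- i odd : (-1)^(i*m) = (-1)^m
        have hM2 : D / i ≠ 2 := by
          intro h
          have hDi : D = i * 2 := Nat.eq_mul_of_div_eq_right hiD h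
          have hcop : Nat.Coprime 2 i := Nat.coprime_two_left.mpr hio
          have h2i : 2 * i ∣ j := hcop.mul_dvd_of_dvd_of_dvd hjeven.two_dvd hij
          have := Nat.le_of_dvd (by omega) h2i
          omega
        have hcongr : ∀ m ∈ (D / i).divisors,
            (ArithmeticFunction.moebius (D / (i * m)) : ℤ) * (-1 : ℤ) ^ (i * m)
              = (ArithmeticFunction.moebius (D / i / m) : ℤ) * (-1 : ℤ) ^ m := by
          intro m hm
          rw [Nat.div_div_eq_div_mul, pow_mul, hio.neg_one_pow]
        rw [Finset.sum_congr rfl hcongr]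
        exact moebius_div_sum_neg_one_pow _ hM0 hM1 hM2)
    rw [← this]
    refine Finset.sum_congr rfl fun k _ => ?_
    rw [hunit k]
end
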